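/- Under linear-quadratic Proposer utility u(a) = −(1−γ)|1−a| − γ(1−a)², the derivative of Proposer's welfare from the interval delegation set [c,1], namely W(c) := u(0)F(c/2) + u(c)(F(c)−F(c/2)) + ∫_c^1 u(v)f(v)dv + u(1)(1−F(1)), satisfies the identity W'(c) = ∫_{c/2}^{c} (v − c) G'(v) dv for c ∈ (0,1), where G(v) := 2γF(v) − (1−γ+2γ(1−v))f(v). -/

import Mathlib

open intervalIntegral

/-- Under linear-quadratic Proposer utility, the derivative of the
welfare `W` from interval delegation `[c,1]` satisfies
`W'(c) = ∫_{c/2}^{c} (v − c) G'(v) dv` for `c ∈ (0,1)`. -/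
theorem stmt_9 (γ : ℝ) (hγ : γ ∈ Set.Icc (0:ℝ) 1)
    (u : ℝ → ℝ) (hu : ∀ a, u a = -(1 - γ) * |1 - a| - γ * (1 - a) ^ 2)
    (F f f' : ℝ → ℝ)
    (hfpos : ∀ v ∈ Set.Icc (0:ℝ) 1, 0 < f v)
    (hf' : ∀ v ∈ Set.Icc (0:ℝ) 1, HasDerivAt f (f' v) v)
    (hf'cont : ContinuousOn f' (Set.Icc 0 1))
    (hF : ∀ v ∈ Set.Icc (0:ℝ) 1, HasDerivAt F (f v) v)
    (G : ℝ → ℝ)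
    (hG : ∀ v, G v = 2 * γ * F v - (1 - γ + 2 * γ * (1 - v)) * f v)
    (W : ℝ → ℝ)
    (hW : ∀ c, W c = u 0 * F (c / 2) + u c * (F c - F (c / 2)) +
      (∫ v in c..1, u v * f v) + u 1 * (1 - F 1)) :
    ∀ c ∈ Set.Ioo (0:ℝ) 1,
      HasDerivAt W (∫ v in (c / 2)..c, (v - c) * deriv G v) c := by
  intro c hc
  obtain ⟨hc0, hc1⟩ := hc
  have hc2 : (0:ℝ) < c / 2 := by linarith
  have hc2c : c / 2 < c := by linarith
  have hcI : c ∈ Set.Icc (0:ℝ) 1 := ⟨hc0.le, hc1.le⟩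
  have hc2I : c / 2 ∈ Set.Icc (0:ℝ) 1 := ⟨hc2.le, by linarith⟩
  have hsub : Set.uIcc (c/2) c ⊆ Set.Icc (0:ℝ) 1 := by
    rw [Set.uIcc_of_le hc2c.le]; exact Set.Icc_subset_Icc hc2.le hc1.le
  have hfc : ContinuousOn f (Set.Icc 0 1) := fun v hv =>
    (hf' v hv).continuousAt.continuousWithinAt
  have hueq : u = fun a => -(1 - γ) * |1 - a| - γ * (1 - a) ^ 2 := funext hu
  have hucont : Continuous u := by rw [hueq]; fun_prop
  -- derivative of u at c
  have h1 : HasDerivAt (fun a : ℝ => (1:ℝ) - a) (-1) c := (hasDerivAt_id c).const_sub 1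
  have hp : HasDerivAt (fun a => -(1 - γ) * (1 - a) - γ * (1 - a) ^ 2)
      (1 + γ - 2 * γ * c) c := by
    have h2 : HasDerivAt (fun a : ℝ => (1 - a) ^ 2) ((2:ℕ) * (1 - c) ^ 1 * (-1)) c :=
      h1.pow 2
    have h3 := (h1.const_mul (-(1 - γ))).sub (h2.const_mul γ)
    refine h3.congr_deriv ?_
    push_cast; ring
  have hu' : HasDerivAt u (1 + γ - 2 * γ * c) c := by
    apply hp.congr_of_eventuallyEq
    filter_upwards [isOpen_Iio.eventually_mem (show c ∈ Set.Iio (1:ℝ) from hc1)] with a ha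
    rw [hu a, abs_of_nonneg (by simp only [Set.mem_Iio] at ha; linarith : (0:ℝ) ≤ 1 - a)]
  -- derivative of x ↦ F (x/2)
  have hF2 : HasDerivAt (fun x => F (x / 2)) (f (c / 2) * (1 / 2)) c := by
    have h3 : HasDerivAt (fun x : ℝ => x / 2) ((1:ℝ) / 2) c := (hasDerivAt_id c).div_const 2
    have := (hF (c/2) hc2I).comp c h3
    exact this
  have hFc : HasDerivAt F (f c) c := hF c hcI
  -- derivative of the integral term
  have hgcontOn : ContinuousOn (fun v => u v * f v) (Set.Icc 0 1) :=
    hucont.continuousOn.mul hfc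
  have hgint : IntervalIntegrable (fun v => u v * f v) MeasureTheory.volume c 1 := by
    apply ContinuousOn.intervalIntegrable
    apply hgcontOn.mono
    rw [Set.uIcc_of_le hc1.le]
    exact Set.Icc_subset_Icc hc0.le le_rfl
  have hmeas : StronglyMeasurableAtFilter (fun v => u v * f v) (nhds c)
      MeasureTheory.volume := by
    have hmono : ContinuousOn (fun v => u v * f v) (Set.Ioo 0 1) :=
      hgcontOn.mono Set.Ioo_subset_Icc_self
    exact hmono.stronglyMeasurableAtFilter isOpen_Ioo _ ⟨hc0, hc1⟩
  have hgcontc : ContinuousAt (fun v => u v * f v) c :=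
    hucont.continuousAt.mul (hf' c hcI).continuousAt
  have hint' : HasDerivAt (fun x => ∫ v in x..1, u v * f v) (-(u c * f c)) c :=
    intervalIntegral.integral_hasDerivAt_left hgint hmeas hgcontc
  -- total derivative of W
  have hWd : HasDerivAt W
      (u 0 * (f (c/2) * (1/2)) +
        ((1 + γ - 2 * γ * c) * (F c - F (c/2)) + u c * (f c - f (c/2) * (1/2))) +
        (-(u c * f c))) c := by
    rw [funext hW]
    exact (((hF2.const_mul (u 0)).add (hu'.mul (hFc.sub hF2))).add hint').add_const _
  -- rewrite deriv G on the integration interval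
  have key : (∫ v in (c/2)..c, (v - c) * deriv G v)
      = (∫ v in (c/2)..c, (v - c) * (4*γ*f v - (1 + γ - 2*γ*v) * f' v)) := by
    apply intervalIntegral.integral_congr
    intro v hv
    have hvI : v ∈ Set.Icc (0:ℝ) 1 := hsub hv
    have hGd : HasDerivAt G (4*γ*f v - (1 + γ - 2*γ*v) * f' v) v := by
      have hFv := hF v hvI
      have hfv := hf' v hvI
      have h4 : HasDerivAt (fun w : ℝ => 1 - γ + 2*γ*(1-w)) (-(2*γ)) v := by
        have h5 : HasDerivAt (fun w : ℝ => (1:ℝ) - w) (-1) v := (hasDerivAt_id v).const_sub 1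
        have := ((h5.const_mul (2*γ)).const_add (1 - γ))
        refine this.congr_deriv ?_
        ring
      have h6 := (hFv.const_mul (2*γ)).sub (h4.mul hfv)
      rw [funext hG]
      refine h6.congr_deriv ?_
      ring
    simp only [hGd.deriv]
  -- FTC with antiderivative Φ
  have hderivΦ : ∀ v ∈ Set.uIcc (c/2) c,
      HasDerivAt (fun w => (1 + γ - 2*γ*c) * F w - (w - c) * (1 + γ - 2*γ*w) * f w)
        ((v - c) * (4*γ*f v - (1 + γ - 2*γ*v) * f' v)) v := by
    intro v hv
    have hvI : v ∈ Set.Icc (0:ℝ) 1 := hsub hv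
    have hFv := hF v hvI
    have hfv := hf' v hvI
    have hlin : HasDerivAt (fun w : ℝ => (w - c) * (1 + γ - 2*γ*w))
        (1 * (1 + γ - 2*γ*v) + (v - c) * (-(2*γ*1))) v := by
      have h7 : HasDerivAt (fun w : ℝ => w - c) (1:ℝ) v := (hasDerivAt_id v).sub_const c
      have h8 : HasDerivAt (fun w : ℝ => 1 + γ - 2*γ*w) (-(2*γ*1)) v := by
        have := ((hasDerivAt_id v).const_mul (2*γ)).const_sub (1 + γ)
        exact this
      exact h7.mul h8
    have h9 := (hFv.const_mul (1 + γ - 2*γ*c)).sub (hlin.mul hfv)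
    refine h9.congr_deriv ?_
    ring
  have hintg : IntervalIntegrable (fun v => (v - c) * (4*γ*f v - (1 + γ - 2*γ*v) * f' v))
      MeasureTheory.volume (c/2) c := by
    apply ContinuousOn.intervalIntegrable
    apply ContinuousOn.mul
    · fun_prop
    · exact ((continuousOn_const.mul (hfc.mono hsub)).sub
        ((by fun_prop : ContinuousOn (fun v : ℝ => 1 + γ - 2*γ*v) (Set.uIcc (c/2) c)).mul
          (hf'cont.mono hsub)))
  have hFTC := intervalIntegral.integral_eq_sub_of_hasDerivAt hderivΦ hintg
  have habs0 : u 0 = -1 := by rw [hu]; norm_num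
  have habsc : u c = -(1 - γ) * (1 - c) - γ * (1 - c) ^ 2 := by
    rw [hu, abs_of_nonneg (by linarith : (0:ℝ) ≤ 1 - c)]
  have hfinal : (∫ v in (c/2)..c, (v - c) * deriv G v)
      = u 0 * (f (c/2) * (1/2)) +
        ((1 + γ - 2 * γ * c) * (F c - F (c/2)) + u c * (f c - f (c/2) * (1/2))) +
        (-(u c * f c)) := by
    rw [key, hFTC, habs0, habsc]
    ring
  rw [hfinal]
  exact hWd
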